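/- arXiv:2308.15302 — 6 statements merged into one kernel-verified Lean document; each statement's English description precedes it below -/
import Mathlib

section
/- Let x be a fixed non-zero algebraic number of degree deg x. Then there exists a constant C > 0, depending only on x, such that for all integers a, b with a + b·x ≠ 0, one has |a + b·x| ≥ C · max{|a|, |b|, 1}^(−2·deg x). -/
set_option maxHeartbeats 1000000

open Polynomial

/-- Key reduction: it suffices to bound `C ≤ |a+bx| * M^(2d)` with a natural power. -/
theorem aux_key (x : ℂ) (hx : IsAlgebraic ℚ x) (hx0 : x ≠ 0) :
    ∃ C : ℝ, 0 < C ∧ ∀ a b : ℤ, (a : ℂ) + (b : ℂ) * x ≠ 0 →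
      C ≤ ‖(a : ℂ) + (b : ℂ) * x‖ *
          (max (max (|a| : ℝ) (|b| : ℝ)) 1) ^ (2 * (minpoly ℚ x).natDegree) := by
  set d := (minpoly ℚ x).natDegree with hd
  by_cases him : x.im = 0
  · -- x is real
    have hxr : ((x.re : ℝ) : ℂ) = x := Complex.ext rfl (by simp [him])
    set t : ℝ := x.re with ht
    have habs : ∀ a b : ℤ, ‖(a : ℂ) + (b : ℂ) * x‖ = |(a : ℝ) + (b : ℝ) * t| := by
      intro a b
      rw [← hxr]
      rw [show (a : ℂ) + (b : ℂ) * ((t : ℝ) : ℂ) = (((a : ℝ) + (b : ℝ) * t : ℝ) : ℂ) by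
        push_cast; ring]
      rw [Complex.norm_real, Real.norm_eq_abs]
    have hne : ∀ a b : ℤ, (a : ℂ) + (b : ℂ) * x ≠ 0 → (a : ℝ) + (b : ℝ) * t ≠ 0 := by
      intro a b h h0
      apply h
      rw [← hxr, show (a : ℂ) + (b : ℂ) * ((t : ℝ) : ℂ) = (((a : ℝ) + (b : ℝ) * t : ℝ) : ℂ) by
        push_cast; ring, h0, Complex.ofReal_zero]
    by_cases hirr : Irrational t
    · -- irrational real case: Liouville-type estimate
      -- t is a root of the integer normalization of the minimal polynomial
      have hp0 : minpoly ℚ x ≠ 0 := minpoly.ne_zero hx.isIntegral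
      have hpt : aeval t (minpoly ℚ x) = 0 := by
        have h1 : algebraMap ℝ ℂ (aeval t (minpoly ℚ x)) = 0 := by
          rw [← aeval_algebraMap_apply]
          show aeval ((t : ℝ) : ℂ) _ = 0
          rw [hxr]
          exact minpoly.aeval ℚ x
        exact (algebraMap ℝ ℂ).injective (by rw [h1, map_zero])
      set f : ℤ[X] := IsLocalization.integerNormalization (nonZeroDivisors ℤ) (minpoly ℚ x)
        with hf
      have hf0 : f ≠ 0 := by
        intro h0
        exact hp0 (IsFractionRing.integerNormalization_eq_zero_iff.mp h0)
      have hft : aeval t f = 0 :=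
        IsLocalization.integerNormalization_aeval_eq_zero (nonZeroDivisors ℤ) _ hpt
      have hfa : eval t (map (algebraMap ℤ ℝ) f) = 0 := by
        rw [eval_map, ← aeval_def]; exact hft
      have hfdeg : f.natDegree ≤ d := by
        obtain ⟨b, hb⟩ := IsLocalization.integerNormalization_spec
          (nonZeroDivisors ℤ) (minpoly ℚ x)
        refine natDegree_le_iff_coeff_eq_zero.mpr fun i hi => ?_
        have h2 : (minpoly ℚ x).coeff i = 0 := coeff_eq_zero_of_natDegree_lt hi
        have h3 := Polynomial.ext_iff.mp hb.2 i
        rw [coeff_map, coeff_smul] at h3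
        rw [h2, smul_zero] at h3
        exact (algebraMap ℤ ℚ).injective_int (h3.trans (map_zero _).symm)
      have hfpos : 0 < f.natDegree :=
        natDegree_pos_of_aeval_root hf0 hft (fun y hy => Int.cast_injective (α := ℝ) (by simpa using hy))
      obtain ⟨A, hA, hAle⟩ := Liouville.exists_pos_real_of_irrational_root hirr hf0 hfa
      refine ⟨min 1 A⁻¹, lt_min one_pos (inv_pos.mpr hA), fun a b hab => ?_⟩
      set M : ℝ := max (max (|a| : ℝ) (|b| : ℝ)) 1 with hM
      have hM1 : (1 : ℝ) ≤ M := le_max_right _ _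
      have hMa : (|a| : ℝ) ≤ M := le_trans (le_max_left _ _) (le_max_left _ _)
      have hMb : (|b| : ℝ) ≤ M := le_trans (le_max_right _ _) (le_max_left _ _)
      rw [habs a b]
      have habt := hne a b hab
      by_cases hb0 : b = 0
      · -- b = 0 : |a| ≥ 1
        subst hb0
        have ha0 : a ≠ 0 := by simpa using habt
        have h1 : (1 : ℝ) ≤ |(a : ℝ) + (0 : ℤ) * t| := by
          push_cast; rw [zero_mul, add_zero]
          exact_mod_cast Int.one_le_abs ha0
        calc min 1 A⁻¹ ≤ 1 := min_le_left _ _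
          _ ≤ |(a : ℝ) + ((0 : ℤ) : ℝ) * t| := h1
          _ ≤ |(a : ℝ) + ((0 : ℤ) : ℝ) * t| * M ^ (2 * d) :=
              le_mul_of_one_le_right (abs_nonneg _) (one_le_pow₀ hM1)
      · -- b ≠ 0 : apply the Liouville estimate
        set m : ℕ := b.natAbs - 1 with hm
        have hm1 : ((m : ℝ) + 1) = |(b : ℝ)| := by
          have : m + 1 = b.natAbs := Nat.succ_pred_eq_of_pos (Int.natAbs_pos.mpr hb0)
          rw [← Int.cast_abs, Int.abs_eq_natAbs, ← this]
          push_cast; ring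
        set c : ℤ := if 0 < b then -a else a with hc
        have hcm : (c : ℝ) / ((m : ℝ) + 1) = -((a : ℝ) / (b : ℝ)) := by
          rw [hm1]
          rcases lt_or_gt_of_ne hb0 with hneg | hpos
          · have h3 : |(b : ℝ)| = -(b : ℝ) := abs_of_neg (by exact_mod_cast hneg)
            rw [h3, hc, if_neg (not_lt.mpr hneg.le), div_neg]
          · have h3 : |(b : ℝ)| = (b : ℝ) := abs_of_pos (by exact_mod_cast hpos)
            rw [h3, hc, if_pos hpos]
            push_cast
            rw [neg_div]
        have hbne : (b : ℝ) ≠ 0 := Int.cast_ne_zero.mpr hb0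
        have hdiff : t - (c : ℝ) / ((m : ℝ) + 1) = ((a : ℝ) + (b : ℝ) * t) / (b : ℝ) := by
          rw [hcm]; field_simp; ring
        have hL := hAle c m
        rw [hdiff] at hL
        have hVabs : |((a : ℝ) + (b : ℝ) * t) / (b : ℝ)| = |(a : ℝ) + (b : ℝ) * t| / |(b : ℝ)| :=
          abs_div _ _
        rw [hVabs, hm1] at hL
        set V : ℝ := |(a : ℝ) + (b : ℝ) * t| with hV
        have hBpos : (0 : ℝ) < |(b : ℝ)| := abs_pos.mpr hbne
        have hB1 : (1 : ℝ) ≤ |(b : ℝ)| := by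
          rw [← Int.cast_abs]; exact_mod_cast Int.one_le_abs hb0
        obtain ⟨e, he⟩ : ∃ e, f.natDegree = e + 1 :=
          ⟨f.natDegree - 1, (Nat.succ_pred_eq_of_pos hfpos).symm⟩
        have hL2 : 1 ≤ |(b : ℝ)| ^ e * V * A := by
          have : |(b : ℝ)| ^ f.natDegree * (V / |(b : ℝ)| * A)
              = |(b : ℝ)| ^ e * V * A := by
            rw [he, pow_succ]
            field_simp
          rw [this] at hL
          exact hL
        have hpow : |(b : ℝ)| ^ e ≤ M ^ (2 * d) := by
          calc |(b : ℝ)| ^ e ≤ M ^ e := pow_le_pow_left₀ hBpos.le hMb e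
            _ ≤ M ^ (2 * d) := pow_le_pow_right₀ hM1 (by omega)
        have hV0 : (0 : ℝ) ≤ V := abs_nonneg _
        have hL3 : 1 ≤ M ^ (2 * d) * V * A :=
          hL2.trans (mul_le_mul_of_nonneg_right
            (mul_le_mul_of_nonneg_right hpow hV0) hA.le)
        have : A⁻¹ ≤ V * M ^ (2 * d) := by
          rw [inv_eq_one_div, div_le_iff₀ hA,
            show V * M ^ (2 * d) * A = M ^ (2 * d) * V * A by ring]
          exact hL3
        exact le_trans (min_le_right _ _) this
    · -- rational real case
      rw [Irrational] at hirr
      push_neg at hirr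
      obtain ⟨r, hr⟩ := not_not.mp (by simpa [Irrational] using hirr)
      have hden : (0 : ℝ) < (r.den : ℝ) := by exact_mod_cast r.pos
      refine ⟨min 1 ((r.den : ℝ))⁻¹, lt_min one_pos (inv_pos.mpr hden), fun a b hab => ?_⟩
      set M : ℝ := max (max (|a| : ℝ) (|b| : ℝ)) 1 with hM
      have hM1 : (1 : ℝ) ≤ M := le_max_right _ _
      rw [habs a b]
      have habt := hne a b hab
      set k : ℤ := a * r.den + b * r.num with hk
      have hkr : (k : ℝ) = ((a : ℝ) + (b : ℝ) * t) * (r.den : ℝ) := by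
        have ht' : t = (r.num : ℝ) / (r.den : ℝ) := by
          rw [← hr, Rat.cast_def]
        rw [hk, ht']
        push_cast
        field_simp
      have hk0 : k ≠ 0 := by
        intro h0
        have hkr0 : ((a : ℝ) + (b : ℝ) * t) * (r.den : ℝ) = 0 := by
          rw [← hkr, h0]; norm_num
        rcases mul_eq_zero.mp hkr0 with h | h
        · exact habt h
        · exact hden.ne' h
      have h1k : (1 : ℝ) ≤ |(k : ℝ)| := by
        rw [← Int.cast_abs]; exact_mod_cast Int.one_le_abs hk0
      have hVbound : ((r.den : ℝ))⁻¹ ≤ |(a : ℝ) + (b : ℝ) * t| := by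
        rw [hkr, abs_mul, abs_of_pos hden] at h1k
        rw [inv_eq_one_div, div_le_iff₀ hden]
        linarith
      calc min 1 ((r.den : ℝ))⁻¹ ≤ ((r.den : ℝ))⁻¹ := min_le_right _ _
        _ ≤ |(a : ℝ) + (b : ℝ) * t| := hVbound
        _ ≤ |(a : ℝ) + (b : ℝ) * t| * M ^ (2 * d) :=
            le_mul_of_one_le_right (abs_nonneg _) (one_le_pow₀ hM1)
  · -- x is not real
    refine ⟨min 1 |x.im|, lt_min one_pos (abs_pos.mpr him), fun a b hab => ?_⟩
    set M : ℝ := max (max (|a| : ℝ) (|b| : ℝ)) 1 with hM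
    have hM1 : (1 : ℝ) ≤ M := le_max_right _ _
    have hMpow : (1 : ℝ) ≤ M ^ (2 * d) := one_le_pow₀ hM1
    have hVC : min 1 |x.im| ≤ ‖(a : ℂ) + (b : ℂ) * x‖ := by
      by_cases hb0 : b = 0
      · subst hb0
        have ha0 : a ≠ 0 := by simpa using hab
        have : ‖(a : ℂ) + ((0 : ℤ) : ℂ) * x‖ = |(a : ℝ)| := by
          push_cast; rw [zero_mul, add_zero, Complex.norm_intCast]
        rw [this]
        calc min 1 |x.im| ≤ 1 := min_le_left _ _
          _ ≤ |(a : ℝ)| := by rw [← Int.cast_abs]; exact_mod_cast Int.one_le_abs ha0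
      · have him' : ((a : ℂ) + (b : ℂ) * x).im = (b : ℝ) * x.im := by simp
        have h1 : |(b : ℝ) * x.im| ≤ ‖(a : ℂ) + (b : ℂ) * x‖ := by
          rw [← him']; exact Complex.abs_im_le_norm _
        have hb1 : (1 : ℝ) ≤ |(b : ℝ)| := by
          rw [← Int.cast_abs]; exact_mod_cast Int.one_le_abs hb0
        have h2 : |x.im| ≤ |(b : ℝ) * x.im| := by
          rw [abs_mul]
          exact le_mul_of_one_le_left (abs_nonneg _) hb1
        calc min 1 |x.im| ≤ |x.im| := min_le_right _ _
          _ ≤ _ := le_trans h2 h1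
    calc min 1 |x.im| ≤ ‖(a : ℂ) + (b : ℂ) * x‖ := hVC
      _ ≤ _ := le_mul_of_one_le_right (norm_nonneg _) hMpow

/-- Lemma 2.2: for a fixed non-zero algebraic number `x` there is `C > 0`,
depending only on `x`, such that `|a + b·x| ≥ C·max{|a|,|b|,1}^(−2·deg x)` for
all integers `a, b` with `a + b·x ≠ 0`. -/
theorem stmt_0 (x : ℂ) (hx : IsAlgebraic ℚ x) (hx0 : x ≠ 0) :
    ∃ C : ℝ, 0 < C ∧ ∀ a b : ℤ, (a : ℂ) + (b : ℂ) * x ≠ 0 →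
      C * (max (max (|a| : ℝ) (|b| : ℝ)) 1) ^
          (-(2 * ((minpoly ℚ x).natDegree : ℝ))) ≤
        ‖(a : ℂ) + (b : ℂ) * x‖ := by
  obtain ⟨C, hC, h⟩ := aux_key x hx hx0
  refine ⟨C, hC, fun a b hab => ?_⟩
  set M : ℝ := max (max (|a| : ℝ) (|b| : ℝ)) 1 with hM
  have hM1 : (1 : ℝ) ≤ M := le_max_right _ _
  have hM0 : (0 : ℝ) < M := lt_of_lt_of_le one_pos hM1
  have hrw : M ^ (-(2 * ((minpoly ℚ x).natDegree : ℝ)))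
      = (M ^ (2 * (minpoly ℚ x).natDegree))⁻¹ := by
    rw [Real.rpow_neg hM0.le, ← Real.rpow_natCast M (2 * (minpoly ℚ x).natDegree)]
    push_cast
    ring_nf
  rw [hrw, ← div_eq_mul_inv, div_le_iff₀ (by positivity)]
  exact h a b hab
end

section
/- Let a be an algebraic number of degree d with denominator c_d (the leading coefficient of its minimal polynomial over ℤ). Then H(a)^d = M(a) ≤ |c_d| · max{|a̅|^d, 1}, where a̅ denotes the house of a, M(a) the Mahler measure, and H(a) the absolute Weil height. -/
/-- The minimal polynomial over `ℤ` of an algebraic number: the primitive part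
of the integer normalization of `minpoly ℚ x`. -/
noncomputable def intMinpoly (x : ℂ) : Polynomial ℤ :=
  (IsLocalization.integerNormalization (nonZeroDivisors ℤ) (minpoly ℚ x)).primPart

/-- The Mahler measure of an algebraic number `x`:
`M(x) = |c_d| · ∏_i max{1, |x_i|}` over the conjugates `x_i` of `x`, where `c_d`
is the denominator of `x` (leading coefficient of its `ℤ`-minimal polynomial). -/
noncomputable def mahlerM (x : ℂ) : ℝ :=
  |((intMinpoly x).leadingCoeff : ℝ)| *
    (((minpoly ℚ x).aroots ℂ).map (fun r => max 1 ‖r‖)).prod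

/-- The absolute multiplicative Weil height `H(x) = M(x)^(1/deg x)`. -/
noncomputable def height (x : ℂ) : ℝ :=
  mahlerM x ^ (((minpoly ℚ x).natDegree : ℝ)⁻¹)

/-- The house of an algebraic number `x`. -/
noncomputable def house (x : ℂ) : ℝ :=
  (((minpoly ℚ x).aroots ℂ).map (fun r : ℂ => ‖r‖)).fold max 0

lemma le_fold_max (s : Multiset ℝ) (x : ℝ) (hx : x ∈ s) : x ≤ s.fold max 0 := by
  induction s using Multiset.induction with
  | empty => simp at hx
  | cons a s ih =>
    rw [Multiset.fold_cons_left]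
    rcases Multiset.mem_cons.mp hx with h | h
    · exact h ▸ le_max_left _ _
    · exact (ih h).trans (le_max_right _ _)

lemma fold_max_nonneg (s : Multiset ℝ) : 0 ≤ s.fold max 0 := by
  induction s using Multiset.induction with
  | empty => simp
  | cons a s ih => rw [Multiset.fold_cons_left]; exact ih.trans (le_max_right _ _)

lemma prod_le_pow (s : Multiset ℝ) (n : ℝ) (h : ∀ x ∈ s, x ≤ n) (h0 : ∀ x ∈ s, (0:ℝ) ≤ x) :
    s.prod ≤ n ^ (Multiset.card s) := by
  induction s using Multiset.induction with
  | empty => simp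
  | cons a s ih =>
    rw [Multiset.prod_cons, Multiset.card_cons, pow_succ, mul_comm (n ^ _) n]
    have hn : (0:ℝ) ≤ n := le_trans (h0 a (Multiset.mem_cons_self a s)) (h a (Multiset.mem_cons_self a s))
    exact mul_le_mul (h a (Multiset.mem_cons_self a s))
      (ih (fun x hx => h x (Multiset.mem_cons_of_mem hx)) (fun x hx => h0 x (Multiset.mem_cons_of_mem hx)))
      (Multiset.prod_nonneg (fun x hx => h0 x (Multiset.mem_cons_of_mem hx))) hn


/-- Lemma 3.4: `H(a)^d = M(a) ≤ |c_d| · max{house(a)^d, 1}` for an algebraic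
number `a` of degree `d` with denominator `c_d`. -/
theorem stmt_2 (a : ℂ) (ha : IsAlgebraic ℚ a) :
    height a ^ (minpoly ℚ a).natDegree = mahlerM a ∧
      mahlerM a ≤ |((intMinpoly a).leadingCoeff : ℝ)| *
        max (house a ^ (minpoly ℚ a).natDegree) 1 := by
  have hint : IsIntegral ℚ a := ha.isIntegral
  have hd : 0 < (minpoly ℚ a).natDegree := minpoly.natDegree_pos hint
  have hprod0 : (0:ℝ) ≤ (((minpoly ℚ a).aroots ℂ).map (fun r => max 1 ‖r‖)).prod :=
    Multiset.prod_nonneg (by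
      intro x hx
      obtain ⟨r, _, rfl⟩ := Multiset.mem_map.mp hx
      positivity)
  have hM0 : 0 ≤ mahlerM a := mul_nonneg (abs_nonneg _) hprod0
  constructor
  · rw [height, ← Real.rpow_natCast (mahlerM a ^ _) , Real.rpow_natCast, ← Real.rpow_natCast _ ((minpoly ℚ a).natDegree), ← Real.rpow_mul hM0, inv_mul_cancel₀ (by exact_mod_cast hd.ne'), Real.rpow_one]
  · rw [mahlerM]
    apply mul_le_mul_of_nonneg_left _ (abs_nonneg _)
    have hcard : Multiset.card (((minpoly ℚ a).aroots ℂ).map (fun r => max 1 ‖r‖)) = (minpoly ℚ a).natDegree := by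
      rw [Multiset.card_map]
      have hne : minpoly ℚ a ≠ 0 := minpoly.ne_zero hint
      exact IsAlgClosed.card_roots_map_eq_natDegree_of_injective _ (algebraMap ℚ ℂ).injective
    have h1 : (((minpoly ℚ a).aroots ℂ).map (fun r => max 1 ‖r‖)).prod ≤ (max 1 (house a)) ^ (minpoly ℚ a).natDegree := by
      rw [← hcard]
      apply prod_le_pow
      · intro x hx
        obtain ⟨r, hr, rfl⟩ := Multiset.mem_map.mp hx
        exact max_le_max le_rfl (le_fold_max _ _ (Multiset.mem_map_of_mem _ hr))
      · intro x hx
        obtain ⟨r, hr, rfl⟩ := Multiset.mem_map.mp hx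
        positivity
    refine h1.trans (le_of_eq ?_)
    have hh0 : (0:ℝ) ≤ house a := fold_max_nonneg _
    rcases le_total (house a) 1 with h | h
    · rw [max_eq_left h, one_pow, max_eq_right (pow_le_one₀ hh0 h)]
    · rw [max_eq_right h, max_eq_left (one_le_pow₀ h)]
end

section
/- Let a and b be algebraic numbers that are not conjugate over ℚ (i.e., they do not share the same minimal polynomial). Then |a − b| ≥ (2·H(a)·H(b))^(−deg(a)·deg(b)), where H denotes the absolute Weil height. -/
open Polynomial Matrix Finset in
private lemma prod_Ioi_eq_prod_ite {N : ℕ} (f : Fin N → Fin N → ℂ) :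
    ∏ k, ∏ l ∈ Finset.Ioi k, f k l = ∏ k, ∏ l, if k < l then f k l else 1 := by
  refine Finset.prod_congr rfl fun k _ => ?_
  rw [show Finset.Ioi k = Finset.univ.filter (fun l => k < l) by ext; simp,
    Finset.prod_filter]

open Matrix Finset in
private lemma vand_split {m n : ℕ} (α : Fin m → ℂ) (β : Fin n → ℂ) :
    (Matrix.vandermonde (Sum.elim β α ∘ (finSumFinEquiv (m := n) (n := m)).symm)).det =
      (Matrix.vandermonde β).det * (Matrix.vandermonde α).det *
        ∏ j : Fin n, ∏ i : Fin m, (α i - β j) := by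
  classical
  set κ := (finSumFinEquiv (m := n) (n := m)) with hκ
  set γ : Fin n ⊕ Fin m → ℂ := Sum.elim β α with hγ
  simp only [Matrix.det_vandermonde]
  rw [prod_Ioi_eq_prod_ite, prod_Ioi_eq_prod_ite, prod_Ioi_eq_prod_ite]
  have step1 : ∏ k : Fin (n + m), ∏ l : Fin (n + m),
      (if k < l then (γ ∘ κ.symm) l - (γ ∘ κ.symm) k else 1) =
      ∏ c : Fin n ⊕ Fin m, ∏ d : Fin n ⊕ Fin m,
        (if κ c < κ d then γ d - γ c else 1) := by
    rw [← Equiv.prod_comp κ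
      (fun k => ∏ l : Fin (n + m), (if k < l then (γ ∘ κ.symm) l - (γ ∘ κ.symm) k else 1))]
    refine Finset.prod_congr rfl fun c _ => ?_
    rw [← Equiv.prod_comp κ
      (fun l => if κ c < l then (γ ∘ κ.symm) l - (γ ∘ κ.symm) (κ c) else 1)]
    simp [Function.comp]
  rw [step1]
  simp only [Fintype.prod_sum_type, Finset.prod_mul_distrib]
  have h11 : ∀ j j' : Fin n, (κ (Sum.inl j) < κ (Sum.inl j')) = (j < j') := by
    intro j j'
    rw [eq_iff_iff, hκ]
    simp only [finSumFinEquiv_apply_left]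
    rw [Fin.lt_def, Fin.lt_def]
    simp
  have h12 : ∀ (j : Fin n) (i : Fin m), (κ (Sum.inl j) < κ (Sum.inr i)) = True := by
    intro j i
    rw [eq_iff_iff, hκ]
    simp only [finSumFinEquiv_apply_left, finSumFinEquiv_apply_right, Fin.lt_def,
      Fin.coe_castAdd, Fin.coe_natAdd, eq_iff_iff, iff_true]
    omega
  have h21 : ∀ (i : Fin m) (j : Fin n), (κ (Sum.inr i) < κ (Sum.inl j)) = False := by
    intro i j
    rw [eq_iff_iff, hκ]
    simp only [finSumFinEquiv_apply_left, finSumFinEquiv_apply_right, Fin.lt_def,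
      Fin.coe_castAdd, Fin.coe_natAdd, eq_iff_iff, iff_false, not_lt]
    omega
  have h22 : ∀ i i' : Fin m, (κ (Sum.inr i) < κ (Sum.inr i')) = (i < i') := by
    intro i i'
    rw [eq_iff_iff, hκ]
    simp only [finSumFinEquiv_apply_right]
    rw [Fin.lt_def, Fin.lt_def]
    simp
  simp only [h11, h12, h21, h22, if_true, if_false, hγ, Sum.elim_inl, Sum.elim_inr,
    Finset.prod_const_one]
  ring

open Polynomial Matrix Finset in
private lemma sylvester_key {m n : ℕ} (P Q : Polynomial ℤ) (α : Fin m → ℂ) (β : Fin n → ℂ)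
    (u v : ℂ) (hu : u ≠ 0) (hv : v ≠ 0)
    (hP : P.map (Int.castRingHom ℂ) = C u * ∏ i, (X - C (α i)))
    (hQ : Q.map (Int.castRingHom ℂ) = C v * ∏ j, (X - C (β j)))
    (hα : Function.Injective α) (hβ : Function.Injective β)
    (hαβ : ∀ i j, α i ≠ β j) :
    ∃ r : ℤ, r ≠ 0 ∧
      (r : ℂ) = (-1) ^ (m * n) * u ^ n * v ^ m * ∏ i, ∏ j, (α i - β j) := by
  classical
  set κ := (finSumFinEquiv (m := n) (n := m)) with hκ
  set f := (Int.castRingHom ℂ) with hf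
  set Pc := P.map f with hPc
  set Qc := Q.map f with hQc
  have hprodP : (∏ i, (X - C (α i)) : ℂ[X]) ≠ 0 :=
    Finset.prod_ne_zero_iff.mpr fun i _ => X_sub_C_ne_zero _
  have hprodQ : (∏ j, (X - C (β j)) : ℂ[X]) ≠ 0 :=
    Finset.prod_ne_zero_iff.mpr fun j _ => X_sub_C_ne_zero _
  have hPc0 : Pc ≠ 0 := by rw [hP]; exact mul_ne_zero (by simpa using hu) hprodP
  have hQc0 : Qc ≠ 0 := by rw [hQ]; exact mul_ne_zero (by simpa using hv) hprodQ
  have hPdeg : Pc.natDegree = m := by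
    rw [hP, natDegree_C_mul hu, natDegree_prod _ _ fun i _ => X_sub_C_ne_zero _]
    simp
  have hQdeg : Qc.natDegree = n := by
    rw [hQ, natDegree_C_mul hv, natDegree_prod _ _ fun j _ => X_sub_C_ne_zero _]
    simp
  -- evaluation facts
  have hPe : ∀ z : ℂ, Pc.eval z = u * ∏ i, (z - α i) := by
    intro z; rw [hP]; simp [eval_prod]
  have hQe : ∀ z : ℂ, Qc.eval z = v * ∏ j, (z - β j) := by
    intro z; rw [hQ]; simp [eval_prod]
  have hPz : ∀ i, Pc.eval (α i) = 0 := by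
    intro i
    rw [hPe]
    refine mul_eq_zero_of_right _ (Finset.prod_eq_zero (Finset.mem_univ i) ?_)
    simp
  -- the Sylvester matrix
  set rowPoly : Fin n ⊕ Fin m → Polynomial ℤ :=
    Sum.elim (fun i => X ^ (i : ℕ) * P) (fun j => X ^ (j : ℕ) * Q) with hrowPoly
  set S : Matrix (Fin n ⊕ Fin m) (Fin n ⊕ Fin m) ℤ :=
    Matrix.of fun r c => (rowPoly r).coeff (κ c) with hS
  set γ : Fin n ⊕ Fin m → ℂ := Sum.elim β α with hγ
  set W : Matrix (Fin n ⊕ Fin m) (Fin n ⊕ Fin m) ℂ :=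
    Matrix.of fun c t => γ t ^ ((κ c : ℕ)) with hW
  have hrowmap : ∀ r, (rowPoly r).map f =
      Sum.elim (fun i : Fin n => X ^ (i : ℕ) * Pc) (fun j : Fin m => X ^ (j : ℕ) * Qc) r := by
    rintro (i | j) <;> simp [hrowPoly, Polynomial.map_mul, Polynomial.map_pow, hPc, hQc]
  have hrowdeg : ∀ r, ((rowPoly r).map f).natDegree < n + m := by
    rintro (i | j) <;> rw [hrowmap]
    · simp only [Sum.elim_inl]
      rw [natDegree_X_pow_mul _ hPc0, hPdeg]
      have := i.isLt; omega
    · simp only [Sum.elim_inr]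
      rw [natDegree_X_pow_mul _ hQc0, hQdeg]
      have := j.isLt; omega
  have hSW : (f.mapMatrix S) * W =
      Matrix.of (fun r t => ((rowPoly r).map f).eval (γ t)) := by
    ext r t
    simp only [Matrix.mul_apply, RingHom.mapMatrix_apply, Matrix.map_apply, Matrix.of_apply,
      hS, hW]
    have : ((rowPoly r).map f).eval (γ t) =
        ∑ c : Fin n ⊕ Fin m, ((rowPoly r).map f).coeff (κ c) * γ t ^ ((κ c : ℕ)) := by
      rw [eval_eq_sum_range' (hrowdeg r) (γ t),
        ← Fin.sum_univ_eq_sum_range (fun k => ((rowPoly r).map f).coeff k * γ t ^ k) (n + m),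
        ← Equiv.sum_comp κ (fun k : Fin (n + m) => ((rowPoly r).map f).coeff k * γ t ^ (k : ℕ))]
    rw [this]
    refine Finset.sum_congr rfl fun c _ => ?_
    rw [coeff_map]
  have hblocks : Matrix.of (fun r t => ((rowPoly r).map f).eval (γ t)) =
      Matrix.fromBlocks
        (Matrix.of fun i j : Fin n => β j ^ (i : ℕ) * Pc.eval (β j)) 0
        (Matrix.of fun (j : Fin m) (j' : Fin n) => β j' ^ (j : ℕ) * Qc.eval (β j'))
        (Matrix.of fun (j : Fin m) (i' : Fin m) => α i' ^ (j : ℕ) * Qc.eval (α i')) := by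
    ext (i | j) (j' | i') <;>
      simp [hrowmap, hγ, hPz, Matrix.fromBlocks]
  have hdetA1 : (Matrix.of fun i j : Fin n => β j ^ (i : ℕ) * Pc.eval (β j)).det =
      (Matrix.vandermonde β).det * ∏ j, Pc.eval (β j) := by
    have : (Matrix.of fun i j : Fin n => β j ^ (i : ℕ) * Pc.eval (β j)) =
        (Matrix.vandermonde β)ᵀ * Matrix.diagonal (fun j => Pc.eval (β j)) := by
      ext i j
      rw [Matrix.mul_diagonal]
      simp [Matrix.vandermonde]
    rw [this, Matrix.det_mul, Matrix.det_transpose, Matrix.det_diagonal]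
  have hdetA2 : (Matrix.of fun (j : Fin m) (i' : Fin m) => α i' ^ (j : ℕ) * Qc.eval (α i')).det =
      (Matrix.vandermonde α).det * ∏ i, Qc.eval (α i) := by
    have : (Matrix.of fun (j : Fin m) (i' : Fin m) => α i' ^ (j : ℕ) * Qc.eval (α i')) =
        (Matrix.vandermonde α)ᵀ * Matrix.diagonal (fun i => Qc.eval (α i)) := by
      ext j i'
      rw [Matrix.mul_diagonal]
      simp [Matrix.vandermonde]
    rw [this, Matrix.det_mul, Matrix.det_transpose, Matrix.det_diagonal]
  have hdetW : W.det = (Matrix.vandermonde β).det * (Matrix.vandermonde α).det *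
      ∏ j : Fin n, ∏ i : Fin m, (α i - β j) := by
    have : W = ((Matrix.vandermonde (γ ∘ κ.symm)).submatrix κ κ)ᵀ := by
      ext c t
      simp [hW, Matrix.vandermonde, Matrix.submatrix, Matrix.transpose_apply]
    rw [this, Matrix.det_transpose, Matrix.det_submatrix_equiv_self]
    exact vand_split α β
  have hEq : ((S.det : ℤ) : ℂ) * W.det =
      ((Matrix.vandermonde β).det * ∏ j, Pc.eval (β j)) *
        ((Matrix.vandermonde α).det * ∏ i, Qc.eval (α i)) := by
    have h1 := congrArg Matrix.det hSW
    rw [Matrix.det_mul, hblocks, Matrix.det_fromBlocks_zero₁₂, hdetA1, hdetA2,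
      ← RingHom.map_det] at h1
    exact h1
  -- compute the products of evaluations
  set CR : ℂ := ∏ j : Fin n, ∏ i : Fin m, (α i - β j) with hCR
  have hPprod : ∏ j, Pc.eval (β j) = u ^ n * ((-1) ^ (m * n) * CR) := by
    have h1 : ∀ j : Fin n, Pc.eval (β j) = u * ((-1) ^ m * ∏ i, (α i - β j)) := by
      intro j
      rw [hPe]
      congr 1
      calc ∏ i, (β j - α i) = ∏ i, (-1) * (α i - β j) :=
            Finset.prod_congr rfl fun i _ => by ring
        _ = (-1) ^ m * ∏ i, (α i - β j) := by
            rw [Finset.prod_mul_distrib, Finset.prod_const]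
            simp
    simp only [h1]
    rw [Finset.prod_mul_distrib, Finset.prod_const, Finset.prod_mul_distrib,
      Finset.prod_const, hCR]
    simp only [Finset.card_univ, Fintype.card_fin, ← pow_mul]
  have hQprod : ∏ i, Qc.eval (α i) = v ^ m * CR := by
    have h1 : ∀ i : Fin m, Qc.eval (α i) = v * ∏ j, (α i - β j) := fun i => hQe (α i)
    simp only [h1]
    rw [Finset.prod_mul_distrib, Finset.prod_const, hCR, Finset.prod_comm]
    simp
  have hVβ : (Matrix.vandermonde β).det ≠ 0 := by
    rw [Matrix.det_vandermonde]
    refine Finset.prod_ne_zero_iff.mpr fun k _ => Finset.prod_ne_zero_iff.mpr fun l hl => ?_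
    exact sub_ne_zero_of_ne (hβ.ne (Finset.mem_Ioi.mp hl).ne')
  have hVα : (Matrix.vandermonde α).det ≠ 0 := by
    rw [Matrix.det_vandermonde]
    refine Finset.prod_ne_zero_iff.mpr fun k _ => Finset.prod_ne_zero_iff.mpr fun l hl => ?_
    exact sub_ne_zero_of_ne (hα.ne (Finset.mem_Ioi.mp hl).ne')
  have hCR0 : CR ≠ 0 := by
    rw [hCR]
    exact Finset.prod_ne_zero_iff.mpr fun j _ => Finset.prod_ne_zero_iff.mpr fun i _ =>
      sub_ne_zero_of_ne (hαβ i j)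
  have hkey : ((S.det : ℤ) : ℂ) = (-1) ^ (m * n) * u ^ n * v ^ m * CR := by
    have hne : (Matrix.vandermonde β).det * (Matrix.vandermonde α).det * CR ≠ 0 :=
      mul_ne_zero (mul_ne_zero hVβ hVα) hCR0
    refine mul_right_cancel₀ hne ?_
    calc ((S.det : ℤ) : ℂ) * ((Matrix.vandermonde β).det * (Matrix.vandermonde α).det * CR)
        = ((S.det : ℤ) : ℂ) * W.det := by rw [hdetW]
      _ = ((Matrix.vandermonde β).det * ∏ j, Pc.eval (β j)) *
            ((Matrix.vandermonde α).det * ∏ i, Qc.eval (α i)) := hEq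
      _ = (-1) ^ (m * n) * u ^ n * v ^ m * CR *
            ((Matrix.vandermonde β).det * (Matrix.vandermonde α).det * CR) := by
          rw [hPprod, hQprod]
          ring
  refine ⟨S.det, ?_, ?_⟩
  · intro h0
    rw [h0] at hkey
    simp only [Int.cast_zero] at hkey
    exact (mul_ne_zero (mul_ne_zero (mul_ne_zero (pow_ne_zero _ (by norm_num))
      (pow_ne_zero _ hu)) (pow_ne_zero _ hv)) hCR0) hkey.symm
  · rw [hkey, hCR, Finset.prod_comm]

open Polynomial in
private lemma intMinpoly_map_rat (x : ℂ) (hx : IsAlgebraic ℚ x) :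
    ∃ r : ℚ, r ≠ 0 ∧ (intMinpoly x).map (algebraMap ℤ ℚ) = C r * minpoly ℚ x := by
  have hp0 : minpoly ℚ x ≠ 0 := minpoly.ne_zero hx.isIntegral
  obtain ⟨b, hb⟩ :=
    IsLocalization.integerNormalization_map_to_map (nonZeroDivisors ℤ) (minpoly ℚ x)
  set N := IsLocalization.integerNormalization (nonZeroDivisors ℤ) (minpoly ℚ x) with hN
  have hN0 : N ≠ 0 := by
    rw [hN, Ne, IsFractionRing.integerNormalization_eq_zero_iff]
    exact hp0
  have hc0 : N.content ≠ 0 := by rwa [Ne, content_eq_zero_iff]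
  have hcQ0 : ((N.content : ℤ) : ℚ) ≠ 0 := by exact_mod_cast hc0
  have hb0 : ((b : ℤ) : ℚ) ≠ 0 := by
    have := nonZeroDivisors.coe_ne_zero b
    exact_mod_cast this
  have hdef : intMinpoly x = N.primPart := rfl
  have key : C ((N.content : ℤ) : ℚ) * ((intMinpoly x).map (algebraMap ℤ ℚ)) =
      C ((b : ℤ) : ℚ) * minpoly ℚ x := by
    have h1 := congrArg (Polynomial.map (algebraMap ℤ ℚ)) N.eq_C_content_mul_primPart
    rw [Polynomial.map_mul, map_C] at h1
    have h2 : (b : ℤ) • (minpoly ℚ x) = C ((b : ℤ) : ℚ) * minpoly ℚ x := by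
      rw [← Int.cast_smul_eq_zsmul ℚ, smul_eq_C_mul]
    simp only [algebraMap_int_eq, eq_intCast] at h1 hb ⊢
    rw [hdef, ← h1, hb]
    exact h2
  refine ⟨((b : ℤ) : ℚ) / ((N.content : ℤ) : ℚ), div_ne_zero hb0 hcQ0, ?_⟩
  apply mul_left_cancel₀ (Polynomial.C_ne_zero.mpr hcQ0)
  rw [key, ← mul_assoc, ← C_mul]
  congr 2
  field_simp

open Polynomial in
private lemma intMinpoly_facts (x : ℂ) (hx : IsAlgebraic ℚ x) :
    (intMinpoly x).leadingCoeff ≠ 0 ∧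
    ((intMinpoly x).map (Int.castRingHom ℂ)).roots = (minpoly ℚ x).aroots ℂ ∧
    ((minpoly ℚ x).aroots ℂ).card = (minpoly ℚ x).natDegree ∧
    ((minpoly ℚ x).aroots ℂ).Nodup ∧
    x ∈ (minpoly ℚ x).aroots ℂ ∧
    (∀ z ∈ (minpoly ℚ x).aroots ℂ, minpoly ℚ z = minpoly ℚ x) := by
  have hint := hx.isIntegral
  have hp0 : minpoly ℚ x ≠ 0 := minpoly.ne_zero hint
  have hmonic := minpoly.monic hint
  have hirr := minpoly.irreducible hint
  have hsep : (minpoly ℚ x).Separable := hirr.separable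
  obtain ⟨r, hr0, hrel⟩ := intMinpoly_map_rat x hx
  have h2 : (intMinpoly x).map (Int.castRingHom ℂ) =
      C ((r : ℂ)) * ((minpoly ℚ x).map (algebraMap ℚ ℂ)) := by
    have h3 := congrArg (Polynomial.map (algebraMap ℚ ℂ)) hrel
    rwa [Polynomial.map_map, Polynomial.map_mul, map_C,
      show (algebraMap ℚ ℂ).comp (algebraMap ℤ ℚ) = Int.castRingHom ℂ from
        Subsingleton.elim _ _] at h3
  have hrC : ((r : ℂ)) ≠ 0 := by exact_mod_cast hr0
  refine ⟨?_, ?_, ?_, ?_, ?_, ?_⟩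
  · rw [Ne, leadingCoeff_eq_zero]
    intro h0
    rw [h0, Polynomial.map_zero] at hrel
    rcases mul_eq_zero.mp hrel.symm with h | h
    · exact hr0 (Polynomial.C_eq_zero.mp h)
    · exact hp0 h
  · rw [h2, roots_C_mul _ hrC]
  · rw [aroots, ← (IsAlgClosed.splits ((minpoly ℚ x).map (algebraMap ℚ ℂ))).natDegree_eq_card_roots, natDegree_map]
  · exact nodup_roots (hsep.map)
  · exact (mem_aroots).mpr ⟨hp0, minpoly.aeval ℚ x⟩
  · intro z hz
    rw [mem_aroots] at hz
    exact (minpoly.eq_of_irreducible_of_monic hirr hz.2 hmonic).symm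

private lemma multiset_map_prod_toList {M : Type*} [CommMonoid M] (s : Multiset ℂ) (f : ℂ → M) :
    (s.map f).prod = ∏ i : Fin s.toList.length, f (s.toList.get i) := by
  conv_lhs => rw [← Multiset.coe_toList s]
  rw [Multiset.map_coe, Multiset.prod_coe, ← Fin.prod_univ_fun_getElem]
  simp [List.get_eq_getElem]

open Polynomial in
private lemma intMinpoly_factor (x : ℂ) (hx : IsAlgebraic ℚ x) :
    (intMinpoly x).map (Int.castRingHom ℂ) =
      C (((intMinpoly x).leadingCoeff : ℤ) : ℂ) *
        ∏ i : Fin ((minpoly ℚ x).aroots ℂ).toList.length,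
          (X - C (((minpoly ℚ x).aroots ℂ).toList.get i)) := by
  obtain ⟨hc0, hroots, -, -, -, -⟩ := intMinpoly_facts x hx
  have h1 := (IsAlgClosed.splits ((intMinpoly x).map (Int.castRingHom ℂ))).eq_prod_roots
  rw [leadingCoeff_map_of_injective Int.cast_injective, hroots,
    multiset_map_prod_toList ((minpoly ℚ x).aroots ℂ) (fun z => X - C z)] at h1
  exact h1

open Polynomial Finset in
private lemma key_ineq {m n : ℕ} (a b : ℂ) (P Q : Polynomial ℤ) (α : Fin m → ℂ)
    (β : Fin n → ℂ) (cA cB : ℤ) (hca0 : cA ≠ 0) (hcb0 : cB ≠ 0)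
    (hP : P.map (Int.castRingHom ℂ) = C ((cA : ℤ) : ℂ) * ∏ i, (X - C (α i)))
    (hQ : Q.map (Int.castRingHom ℂ) = C ((cB : ℤ) : ℂ) * ∏ j, (X - C (β j)))
    (hinjα : Function.Injective α) (hinjβ : Function.Injective β)
    (hcross : ∀ i j, α i ≠ β j)
    (i0 : Fin m) (j0 : Fin n) (hi0 : α i0 = a) (hj0 : β j0 = b)
    (MA MB : ℝ)
    (hMA : MA = |(cA : ℝ)| * ∏ i, max 1 (‖α i‖))
    (hMB : MB = |(cB : ℝ)| * ∏ j, max 1 (‖β j‖)) :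
    (1 : ℝ) ≤ ‖a - b‖ * (2 ^ (m * n) * MA ^ n * MB ^ m) := by
  classical
  have hu : ((cA : ℤ) : ℂ) ≠ 0 := Int.cast_ne_zero.mpr hca0
  have hv : ((cB : ℤ) : ℂ) ≠ 0 := Int.cast_ne_zero.mpr hcb0
  obtain ⟨r, hr0, hrId⟩ := sylvester_key P Q α β _ _ hu hv hP hQ hinjα hinjβ hcross
  have habs : ‖((r : ℤ) : ℂ)‖ =
      |(cA : ℝ)| ^ n * |(cB : ℝ)| ^ m * ∏ i, ∏ j, ‖α i - β j‖ := by
    rw [hrId]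
    simp only [norm_mul, norm_pow, norm_prod, Complex.norm_intCast, norm_neg, norm_one,
      one_pow, one_mul]
  have h1le : (1 : ℝ) ≤ ‖((r : ℤ) : ℂ)‖ := by
    rw [Complex.norm_intCast]
    exact_mod_cast Int.one_le_abs hr0
  have hFle : ∀ (i : Fin m) (j : Fin n), ‖α i - β j‖ ≤
      2 * max 1 (‖α i‖) * max 1 (‖β j‖) := by
    intro i j
    have t1 : ‖α i - β j‖ ≤ ‖α i‖ + ‖β j‖ :=
      norm_sub_le _ _
    have h1 : (1 : ℝ) ≤ max 1 (‖α i‖) := le_max_left _ _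
    have h2 : (1 : ℝ) ≤ max 1 (‖β j‖) := le_max_left _ _
    have h3 : ‖α i‖ ≤ max 1 (‖α i‖) := le_max_right _ _
    have h4 : ‖β j‖ ≤ max 1 (‖β j‖) := le_max_right _ _
    nlinarith
  have hG1 : ∀ ij : Fin m × Fin n, (1 : ℝ) ≤
      2 * max 1 (‖α ij.1‖) * max 1 (‖β ij.2‖) := by
    intro ij
    have h1 : (1 : ℝ) ≤ max 1 (‖α ij.1‖) := le_max_left _ _
    have h2 : (1 : ℝ) ≤ max 1 (‖β ij.2‖) := le_max_left _ _
    nlinarith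
  have hprodF : ∏ ij : Fin m × Fin n, ‖α ij.1 - β ij.2‖ ≤
      ‖a - b‖ * ∏ ij : Fin m × Fin n,
        (2 * max 1 (‖α ij.1‖) * max 1 (‖β ij.2‖)) := by
    rw [← Finset.mul_prod_erase Finset.univ _ (Finset.mem_univ (i0, j0))]
    refine mul_le_mul (le_of_eq ?_) ?_ ?_ (norm_nonneg _)
    · show ‖α i0 - β j0‖ = ‖a - b‖
      rw [hi0, hj0]
    · calc ∏ ij ∈ Finset.univ.erase (i0, j0), ‖α ij.1 - β ij.2‖
          ≤ ∏ ij ∈ Finset.univ.erase (i0, j0),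
              (2 * max 1 (‖α ij.1‖) * max 1 (‖β ij.2‖)) :=
            Finset.prod_le_prod (fun _ _ => norm_nonneg _)
              (fun ij _ => hFle ij.1 ij.2)
        _ ≤ ∏ ij : Fin m × Fin n,
              (2 * max 1 (‖α ij.1‖) * max 1 (‖β ij.2‖)) := by
            rw [← Finset.mul_prod_erase Finset.univ _ (Finset.mem_univ (i0, j0))]
            refine le_mul_of_one_le_left (Finset.prod_nonneg fun ij _ => ?_) (hG1 (i0, j0))
            have := hG1 ij; nlinarith
    · exact Finset.prod_nonneg fun _ _ => norm_nonneg _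
  have hGprod : ∏ ij : Fin m × Fin n,
      (2 * max 1 (‖α ij.1‖) * max 1 (‖β ij.2‖)) =
      2 ^ (m * n) * (∏ i, max 1 (‖α i‖)) ^ n *
        (∏ j, max 1 (‖β j‖)) ^ m := by
    rw [Fintype.prod_prod_type]
    calc ∏ i, ∏ j, (2 * max 1 (‖α i‖) * max 1 (‖β j‖))
        = ∏ i, ((2 * max 1 (‖α i‖)) ^ n * ∏ j, max 1 (‖β j‖)) :=
          Finset.prod_congr rfl fun i _ => by
            rw [Finset.prod_mul_distrib, Finset.prod_const, Finset.card_univ,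
              Fintype.card_fin]
      _ = (∏ i, (2 * max 1 (‖α i‖))) ^ n *
            (∏ j, max 1 (‖β j‖)) ^ m := by
          rw [Finset.prod_mul_distrib, Finset.prod_pow, Finset.prod_const, Finset.card_univ,
            Fintype.card_fin]
      _ = (2 ^ m * ∏ i, max 1 (‖α i‖)) ^ n *
            (∏ j, max 1 (‖β j‖)) ^ m := by
          rw [Finset.prod_mul_distrib, Finset.prod_const, Finset.card_univ, Fintype.card_fin]
      _ = 2 ^ (m * n) * (∏ i, max 1 (‖α i‖)) ^ n *
            (∏ j, max 1 (‖β j‖)) ^ m := by ring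
  calc (1 : ℝ) ≤ ‖((r : ℤ) : ℂ)‖ := h1le
    _ = |(cA : ℝ)| ^ n * |(cB : ℝ)| ^ m * ∏ i, ∏ j, ‖α i - β j‖ := habs
    _ = |(cA : ℝ)| ^ n * |(cB : ℝ)| ^ m *
          ∏ ij : Fin m × Fin n, ‖α ij.1 - β ij.2‖ := by
        rw [Fintype.prod_prod_type]
    _ ≤ |(cA : ℝ)| ^ n * |(cB : ℝ)| ^ m * (‖a - b‖ *
          ∏ ij : Fin m × Fin n,
            (2 * max 1 (‖α ij.1‖) * max 1 (‖β ij.2‖))) := by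
        refine mul_le_mul_of_nonneg_left hprodF (by positivity)
    _ = ‖a - b‖ * (2 ^ (m * n) * MA ^ n * MB ^ m) := by
        rw [hGprod, hMA, hMB]; ring

open Polynomial Finset in
/-- Lemma 3.6 (Liouville inequality): if `a, b` are non-conjugate algebraic
numbers then `|a − b| ≥ (2·H(a)·H(b))^(−deg(a)·deg(b))`. -/
theorem stmt_3 (a b : ℂ) (ha : IsAlgebraic ℚ a) (hb : IsAlgebraic ℚ b)
    (hne : minpoly ℚ a ≠ minpoly ℚ b) :
    (2 * height a * height b) ^
        (-(((minpoly ℚ a).natDegree : ℝ) * ((minpoly ℚ b).natDegree : ℝ))) ≤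
      ‖a - b‖ := by
  classical
  obtain ⟨hca0, hrootsA, hcardA, hnodupA, hmemA, hconjA⟩ := intMinpoly_facts a ha
  obtain ⟨hcb0, hrootsB, hcardB, hnodupB, hmemB, hconjB⟩ := intMinpoly_facts b hb
  have hinjα : Function.Injective (((minpoly ℚ a).aroots ℂ).toList.get) :=
    List.nodup_iff_injective_get.mp
      (Multiset.coe_nodup.mp (by rw [Multiset.coe_toList]; exact hnodupA))
  have hinjβ : Function.Injective (((minpoly ℚ b).aroots ℂ).toList.get) :=
    List.nodup_iff_injective_get.mp
      (Multiset.coe_nodup.mp (by rw [Multiset.coe_toList]; exact hnodupB))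
  have hmemα : ∀ i, ((minpoly ℚ a).aroots ℂ).toList.get i ∈ (minpoly ℚ a).aroots ℂ :=
    fun i => Multiset.mem_toList.mp (List.get_mem _ i)
  have hmemβ : ∀ j, ((minpoly ℚ b).aroots ℂ).toList.get j ∈ (minpoly ℚ b).aroots ℂ :=
    fun j => Multiset.mem_toList.mp (List.get_mem _ j)
  have hcross : ∀ i j, ((minpoly ℚ a).aroots ℂ).toList.get i ≠
      ((minpoly ℚ b).aroots ℂ).toList.get j := by
    intro i j h
    exact hne (by rw [← hconjA _ (hmemα i), h, hconjB _ (hmemβ j)])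
  obtain ⟨i0, hi0⟩ := List.mem_iff_get.mp (Multiset.mem_toList.mpr hmemA)
  obtain ⟨j0, hj0⟩ := List.mem_iff_get.mp (Multiset.mem_toList.mpr hmemB)
  have hMAeq : mahlerM a = |((intMinpoly a).leadingCoeff : ℝ)| *
      ∏ i, max 1 (‖((minpoly ℚ a).aroots ℂ).toList.get i‖) := by
    rw [mahlerM]
    congr 1
    exact multiset_map_prod_toList _ _
  have hMBeq : mahlerM b = |((intMinpoly b).leadingCoeff : ℝ)| *
      ∏ j, max 1 (‖((minpoly ℚ b).aroots ℂ).toList.get j‖) := by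
    rw [mahlerM]
    congr 1
    exact multiset_map_prod_toList _ _
  have KEY := key_ineq a b (intMinpoly a) (intMinpoly b)
    (((minpoly ℚ a).aroots ℂ).toList.get) (((minpoly ℚ b).aroots ℂ).toList.get)
    (intMinpoly a).leadingCoeff (intMinpoly b).leadingCoeff hca0 hcb0
    (intMinpoly_factor a ha) (intMinpoly_factor b hb) hinjα hinjβ hcross
    i0 j0 hi0 hj0 (mahlerM a) (mahlerM b) hMAeq hMBeq
  have hlenA : ((minpoly ℚ a).aroots ℂ).toList.length = (minpoly ℚ a).natDegree := by
    rw [Multiset.length_toList, hcardA]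
  have hlenB : ((minpoly ℚ b).aroots ℂ).toList.length = (minpoly ℚ b).natDegree := by
    rw [Multiset.length_toList, hcardB]
  rw [hlenA, hlenB] at KEY
  -- now the analytic conversion
  have hMa1 : (1 : ℝ) ≤ mahlerM a := by
    rw [hMAeq]
    have hCA1 : (1 : ℝ) ≤ |((intMinpoly a).leadingCoeff : ℝ)| := by
      rw [← Int.cast_abs]
      exact_mod_cast Int.one_le_abs hca0
    have hPA1 : (1 : ℝ) ≤ ∏ i, max 1 (‖((minpoly ℚ a).aroots ℂ).toList.get i‖) := by
      have := Finset.prod_le_prod (s := (Finset.univ : Finset (Fin ((minpoly ℚ a).aroots ℂ).toList.length)))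
        (f := fun _ => (1 : ℝ))
        (g := fun i => max 1 (‖((minpoly ℚ a).aroots ℂ).toList.get i‖))
        (fun _ _ => zero_le_one) (fun i _ => le_max_left _ _)
      simpa using this
    nlinarith
  have hMb1 : (1 : ℝ) ≤ mahlerM b := by
    rw [hMBeq]
    have hCB1 : (1 : ℝ) ≤ |((intMinpoly b).leadingCoeff : ℝ)| := by
      rw [← Int.cast_abs]
      exact_mod_cast Int.one_le_abs hcb0
    have hPB1 : (1 : ℝ) ≤ ∏ j, max 1 (‖((minpoly ℚ b).aroots ℂ).toList.get j‖) := by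
      have := Finset.prod_le_prod (s := (Finset.univ : Finset (Fin ((minpoly ℚ b).aroots ℂ).toList.length)))
        (f := fun _ => (1 : ℝ))
        (g := fun j => max 1 (‖((minpoly ℚ b).aroots ℂ).toList.get j‖))
        (fun _ _ => zero_le_one) (fun j _ => le_max_left _ _)
      simpa using this
    nlinarith
  have hha : (1 : ℝ) ≤ height a := Real.one_le_rpow hMa1 (by positivity)
  have hhb : (1 : ℝ) ≤ height b := Real.one_le_rpow hMb1 (by positivity)
  have hT0 : (0 : ℝ) < 2 * height a * height b := by nlinarith
  have hM0 : ((minpoly ℚ a).natDegree : ℝ) ≠ 0 := by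
    exact_mod_cast (minpoly.natDegree_pos ha.isIntegral).ne'
  have hN0 : ((minpoly ℚ b).natDegree : ℝ) ≠ 0 := by
    exact_mod_cast (minpoly.natDegree_pos hb.isIntegral).ne'
  have hTpow : (2 * height a * height b) ^
      (((minpoly ℚ a).natDegree : ℝ) * ((minpoly ℚ b).natDegree : ℝ)) =
      2 ^ ((minpoly ℚ a).natDegree * (minpoly ℚ b).natDegree) *
        mahlerM a ^ (minpoly ℚ b).natDegree * mahlerM b ^ (minpoly ℚ a).natDegree := by
    rw [Real.mul_rpow (by nlinarith) (by nlinarith),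
      Real.mul_rpow (by norm_num) (by nlinarith)]
    congr 1
    · congr 1
      · rw [← Real.rpow_natCast 2 ((minpoly ℚ a).natDegree * (minpoly ℚ b).natDegree)]
        congr 1
        push_cast
        ring
      · rw [height, ← Real.rpow_mul (by nlinarith)]
        rw [show (((minpoly ℚ a).natDegree : ℝ))⁻¹ *
            (((minpoly ℚ a).natDegree : ℝ) * ((minpoly ℚ b).natDegree : ℝ)) =
            (((minpoly ℚ b).natDegree : ℕ) : ℝ) by field_simp]
        exact Real.rpow_natCast _ _
    · rw [height, ← Real.rpow_mul (by nlinarith)]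
      rw [show (((minpoly ℚ b).natDegree : ℝ))⁻¹ *
          (((minpoly ℚ a).natDegree : ℝ) * ((minpoly ℚ b).natDegree : ℝ)) =
          (((minpoly ℚ a).natDegree : ℕ) : ℝ) by field_simp]
      exact Real.rpow_natCast _ _
  rw [Real.rpow_neg hT0.le,
    inv_le_iff_one_le_mul₀ (Real.rpow_pos_of_pos hT0 _)]
  calc (1 : ℝ) ≤ ‖a - b‖ *
        (2 ^ ((minpoly ℚ a).natDegree * (minpoly ℚ b).natDegree) *
          mahlerM a ^ (minpoly ℚ b).natDegree * mahlerM b ^ (minpoly ℚ a).natDegree) := KEY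
    _ = ‖a - b‖ * (2 * height a * height b) ^
          (((minpoly ℚ a).natDegree : ℝ) * ((minpoly ℚ b).natDegree : ℝ)) := by
        rw [hTpow]
end

section
/- Let {y_n} be an unbounded sequence of positive real numbers. Then there are infinitely many positive integers N such that y_N > (1 + 1/N²) · max_{1 ≤ n < N} y_n. -/
lemma stmt4_sum_bound : ∀ N : ℕ, 1 ≤ N → ∑ k ∈ Finset.Icc 2 N, (1:ℝ)/(k:ℝ)^2 ≤ 1 - 1/N := by
  intro N hN
  induction N, hN using Nat.le_induction with
  | base => simp
  | succ N hN ih =>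
    rw [Finset.sum_Icc_succ_top (by omega)]
    have h1 : (0:ℝ) < N := by exact_mod_cast hN.trans_lt' (by norm_num)
    have h2 : (0:ℝ) < (N:ℝ)+1 := by linarith
    push_cast
    have key : (1:ℝ)/((N:ℝ)+1)^2 ≤ 1/N - 1/((N:ℝ)+1) := by
      rw [div_sub_div _ _ h1.ne' h2.ne', div_le_div_iff₀ (by positivity) (by positivity)]
      nlinarith
    linarith

lemma stmt4_prod_bound (N : ℕ) : ∏ k ∈ Finset.Icc 2 N, (1 + 1/(k:ℝ)^2) ≤ 3 := by
  rcases Nat.lt_or_ge N 1 with h | h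
  · interval_cases N; simp
  calc ∏ k ∈ Finset.Icc 2 N, (1 + 1/(k:ℝ)^2)
      ≤ ∏ k ∈ Finset.Icc 2 N, Real.exp (1/(k:ℝ)^2) :=
        Finset.prod_le_prod (fun k _ => by positivity)
          (fun k _ => by have := Real.add_one_le_exp (1/(k:ℝ)^2); linarith)
    _ = Real.exp (∑ k ∈ Finset.Icc 2 N, 1/(k:ℝ)^2) := (Real.exp_sum _ _).symm
    _ ≤ Real.exp 1 := by
        apply Real.exp_le_exp.mpr
        have h2 : (0:ℝ) ≤ 1/(N:ℝ) := by positivity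
        linarith [stmt4_sum_bound N h]
    _ ≤ 3 := le_of_lt (lt_trans Real.exp_one_lt_d9 (by norm_num))

lemma stmt4_one_le (s : Finset ℕ) : (1:ℝ) ≤ ∏ k ∈ s, (1 + 1/(k:ℝ)^2) := by
  have h := Finset.prod_le_prod (s := s) (f := fun _ : ℕ => (1:ℝ))
    (g := fun k : ℕ => 1 + 1/(k:ℝ)^2) (by intros; norm_num)
    (by intro i _
        have : (0:ℝ) ≤ 1/(i:ℝ)^2 := by positivity
        linarith)
  simpa using h

/-- Let `{y_n}` be an unbounded sequence of positive real numbers. Then there are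
infinitely many positive integers `N` such that
`y_N > (1 + 1/N²) · max_{1 ≤ n < N} y_n`. -/
theorem stmt_4 (y : ℕ → ℝ) (hpos : ∀ n, 1 ≤ n → 0 < y n)
    (hunb : ∀ B : ℝ, ∃ n, 1 ≤ n ∧ B < y n) :
    ∀ m : ℕ, ∃ N, m ≤ N ∧ 2 ≤ N ∧
      ∀ n, 1 ≤ n → n < N → (1 + 1 / (N : ℝ) ^ 2) * y n < y N := by
  intro m
  by_contra hcon
  push_neg at hcon
  -- hcon : ∀ N, m ≤ N → 2 ≤ N → ∃ n, 1 ≤ n ∧ n < N ∧ y N ≤ (1+1/N^2) * y n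
  set M := max m 2 with hM
  have hMne : (Finset.Icc 1 M).Nonempty := ⟨1, Finset.mem_Icc.mpr ⟨le_rfl, by omega⟩⟩
  set B := (Finset.Icc 1 M).sup' hMne y with hB
  have hBge : ∀ n, 1 ≤ n → n ≤ M → y n ≤ B :=
    fun n h1 h2 => Finset.le_sup' y (Finset.mem_Icc.mpr ⟨h1, h2⟩)
  have hBpos : 0 < B := lt_of_lt_of_le (hpos 1 le_rfl) (hBge 1 le_rfl (by omega))
  have main : ∀ N, 1 ≤ N → y N ≤ B * ∏ k ∈ Finset.Icc 2 N, (1 + 1/(k:ℝ)^2) := by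
    intro N
    induction N using Nat.strong_induction_on with
    | _ N ih =>
      intro hN1
      have hprod1 : (1:ℝ) ≤ ∏ k ∈ Finset.Icc 2 N, (1 + 1/(k:ℝ)^2) := stmt4_one_le _
      rcases le_or_gt N M with hle | hgt
      · calc y N ≤ B := hBge N hN1 hle
          _ = B * 1 := (mul_one B).symm
          _ ≤ B * ∏ k ∈ Finset.Icc 2 N, (1 + 1/(k:ℝ)^2) := by
              exact mul_le_mul_of_nonneg_left hprod1 hBpos.le
      · obtain ⟨n, hn1, hnN, hle⟩ := hcon N (by omega) (by omega)
        have hfac : (0:ℝ) < 1 + 1/(N:ℝ)^2 := by positivity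
        have ihn := ih n hnN hn1
        have hsub : insert N (Finset.Icc 2 n) ⊆ Finset.Icc 2 N := by
          intro k hk
          simp only [Finset.mem_insert, Finset.mem_Icc] at hk ⊢
          omega
        have hprodle : (1 + 1/(N:ℝ)^2) * ∏ k ∈ Finset.Icc 2 n, (1 + 1/(k:ℝ)^2)
            ≤ ∏ k ∈ Finset.Icc 2 N, (1 + 1/(k:ℝ)^2) := by
          have hNnot : N ∉ Finset.Icc 2 n := by simp; omega
          have hpos2 : (0:ℝ) ≤ ∏ k ∈ insert N (Finset.Icc 2 n), (1 + 1/(k:ℝ)^2) :=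
            Finset.prod_nonneg (fun k _ => by positivity)
          calc (1 + 1/(N:ℝ)^2) * ∏ k ∈ Finset.Icc 2 n, (1 + 1/(k:ℝ)^2)
              = ∏ k ∈ insert N (Finset.Icc 2 n), (1 + 1/(k:ℝ)^2) :=
                (Finset.prod_insert (f := fun k : ℕ => 1 + 1/(k:ℝ)^2) hNnot).symm
            _ ≤ (∏ k ∈ Finset.Icc 2 N \ insert N (Finset.Icc 2 n), (1 + 1/(k:ℝ)^2)) *
                ∏ k ∈ insert N (Finset.Icc 2 n), (1 + 1/(k:ℝ)^2) :=
                le_mul_of_one_le_left hpos2 (stmt4_one_le _)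
            _ = ∏ k ∈ Finset.Icc 2 N, (1 + 1/(k:ℝ)^2) := Finset.prod_sdiff hsub
        calc y N ≤ (1 + 1/(N:ℝ)^2) * y n := hle
          _ ≤ (1 + 1/(N:ℝ)^2) * (B * ∏ k ∈ Finset.Icc 2 n, (1 + 1/(k:ℝ)^2)) :=
              mul_le_mul_of_nonneg_left ihn hfac.le
          _ = B * ((1 + 1/(N:ℝ)^2) * ∏ k ∈ Finset.Icc 2 n, (1 + 1/(k:ℝ)^2)) := by ring
          _ ≤ B * ∏ k ∈ Finset.Icc 2 N, (1 + 1/(k:ℝ)^2) :=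
              mul_le_mul_of_nonneg_left hprodle hBpos.le
  obtain ⟨n, hn1, hn2⟩ := hunb (3 * B)
  have := main n hn1
  have h3 : B * ∏ k ∈ Finset.Icc 2 n, (1 + 1/(k:ℝ)^2) ≤ B * 3 :=
    mul_le_mul_of_nonneg_left (stmt4_prod_bound n) hBpos.le
  linarith
end

section
/- Let ε > 0, 0 < α < 1, 0 ≤ β < ε/(1+ε), and let {a_n}, {b_n} be sequences of positive reals with n^(1+ε) ≤ a_n ≤ a_{n+1} and b_n ≤ a_n^β·2^((log₂ a_n)^α) for all sufficiently large n. Then there exists a fixed 0 < γ < 1 such that for all sufficiently large N, ∑_{n=N}^∞ b_n/a_n ≤ a_N^(−γ). -/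
open Filter in
/-- Under the standing growth assumptions, there is a fixed `0 < γ < 1` such
that for all sufficiently large `N`, `∑_{n=N}^∞ b_n/a_n ≤ a_N^(−γ)`. -/
theorem stmt_16 (ε α β : ℝ) (hε : 0 < ε) (hα0 : 0 < α) (hα1 : α < 1)
    (hβ0 : 0 ≤ β) (hβ : β < ε / (1 + ε)) (a b : ℕ → ℝ)
    (hapos : ∀ n, 0 < a n) (hbpos : ∀ n, 0 < b n)
    (hgrow : ∀ᶠ n : ℕ in atTop,
      (n : ℝ) ^ (1 + ε) ≤ a n ∧ a n ≤ a (n + 1) ∧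
        b n ≤ a n ^ β * 2 ^ (Real.logb 2 (a n)) ^ α) :
    ∃ γ : ℝ, 0 < γ ∧ γ < 1 ∧ ∀ᶠ N : ℕ in atTop,
      (∑' k : ℕ, b (N + k) / a (N + k)) ≤ a N ^ (-γ) := by
  have h1ε : (0:ℝ) < 1 + ε := by linarith
  have hfe : ε / (1 + ε) = 1 - 1/(1+ε) := by field_simp; ring
  set g : ℝ := 1 - β - 1/(1+ε) with hgdef
  have hg : 0 < g := by rw [hgdef]; rw [hfe] at hβ; linarith
  have hg1 : g < 1 := by
    have h2 : 0 < 1/(1+ε) := by positivity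
    rw [hgdef]; linarith
  set s : ℝ := g/4 with hsdef
  set t : ℝ := 1/(1+ε) + g/2 with htdef
  set p : ℝ := (1+ε)*t with hpdef
  have hs0 : 0 < s := by positivity
  have ht0 : 0 < t := by
    have h2 : 0 < 1/(1+ε) := by positivity
    rw [htdef]; linarith
  have hp : 1 < p := by
    have h1 : (1+ε)*(1/(1+ε)) = 1 := by field_simp
    have h2 : 0 < (1+ε)*(g/2) := by positivity
    rw [hpdef, htdef, mul_add, h1]; linarith
  have hS : Summable (fun n : ℕ => (n:ℝ) ^ (-p)) :=
    Real.summable_nat_rpow.2 (by linarith)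
  set S : ℝ := ∑' n : ℕ, (n:ℝ) ^ (-p) with hSdef
  have hS0 : 0 ≤ S := tsum_nonneg fun n => Real.rpow_nonneg (Nat.cast_nonneg n) _
  -- every given C is eventually ≤ a n
  have hbig : ∀ C : ℝ, ∀ᶠ n : ℕ in atTop, C ≤ a n := by
    intro C
    have hcast : Tendsto (fun n : ℕ => (n:ℝ)) atTop atTop := tendsto_natCast_atTop_atTop
    filter_upwards [hcast.eventually_ge_atTop (max C 1), hgrow] with n hn hgn
    have h1n : (1:ℝ) ≤ (n:ℝ) := le_trans (le_max_right _ _) hn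
    have h2 : (n:ℝ) ≤ (n:ℝ) ^ (1+ε) := by
      calc (n:ℝ) = (n:ℝ) ^ (1:ℝ) := (Real.rpow_one _).symm
        _ ≤ (n:ℝ) ^ (1+ε) := Real.rpow_le_rpow_of_exponent_le h1n (by linarith)
    calc C ≤ max C 1 := le_max_left _ _
      _ ≤ (n:ℝ) := hn
      _ ≤ (n:ℝ)^(1+ε) := h2
      _ ≤ a n := hgn.1
  -- the key pointwise bound: 2^((log₂ aₙ)^α) ≤ aₙ^s for large n
  set K : ℝ := s ^ ((α-1)⁻¹) with hKdef
  set L : ℝ := max 1 K with hLdef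
  have hL1 : (1:ℝ) ≤ L := le_max_left _ _
  have hlog : ∀ᶠ n : ℕ in atTop, (2:ℝ) ^ (Real.logb 2 (a n)) ^ α ≤ a n ^ s := by
    filter_upwards [hbig ((2:ℝ) ^ L)] with n hn
    have han := hapos n
    set y : ℝ := Real.logb 2 (a n) with hydef
    have hyL : L ≤ y := (Real.le_logb_iff_rpow_le one_lt_two han).2 hn
    have hy0 : 0 < y := lt_of_lt_of_le (by linarith) hyL
    have hyK : K ≤ y := le_trans (le_max_right _ _) hyL
    have hK0 : 0 < K := Real.rpow_pos_of_pos hs0 _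
    have hstep : y ^ (α - 1) ≤ s := by
      have h1 : y ^ (α-1) ≤ K ^ (α-1) :=
        Real.rpow_le_rpow_of_nonpos hK0 hyK (by linarith)
      have h2 : K ^ (α-1) = s := by
        rw [hKdef, ← Real.rpow_mul hs0.le, inv_mul_cancel₀ (by linarith : α - 1 ≠ 0),
          Real.rpow_one]
      linarith [h1, h2.le]
    have hexp : y ^ α ≤ s * y := by
      have hy : y ^ α = y * y ^ (α-1) := by
        rw [← Real.rpow_one_add' hy0.le (by intro h; linarith)]
        norm_num
      rw [hy]
      calc y * y ^ (α-1) ≤ y * s := mul_le_mul_of_nonneg_left hstep hy0.le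
        _ = s * y := mul_comm _ _
    calc (2:ℝ) ^ y ^ α ≤ (2:ℝ) ^ (s * y) :=
          Real.rpow_le_rpow_of_exponent_le one_le_two hexp
      _ = ((2:ℝ) ^ y) ^ s := by
          rw [mul_comm, Real.rpow_mul (by norm_num : (0:ℝ) ≤ 2)]
      _ = a n ^ s := by rw [hydef, Real.rpow_logb two_pos (by norm_num) han]
  -- pointwise bound on terms
  have hterm : ∀ᶠ n : ℕ in atTop, b n / a n ≤ a n ^ (-s) * a n ^ (-t)
      ∧ a n ^ (-t) ≤ (n:ℝ) ^ (-p) ∧ a n ≤ a (n+1) := by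
    filter_upwards [hgrow, hlog, eventually_ge_atTop 1] with n hgn hlogn hn1
    have han := hapos n
    have hn0 : (0:ℝ) < (n:ℝ) := by exact_mod_cast hn1
    have hb1 : b n ≤ a n ^ (β + s) := by
      calc b n ≤ a n ^ β * 2 ^ (Real.logb 2 (a n)) ^ α := hgn.2.2
        _ ≤ a n ^ β * a n ^ s :=
            mul_le_mul_of_nonneg_left hlogn (Real.rpow_nonneg han.le _)
        _ = a n ^ (β + s) := (Real.rpow_add han _ _).symm
    refine ⟨?_, ?_, hgn.2.1⟩
    · have h1 : b n / a n ≤ a n ^ (β + s - 1) := by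
        rw [Real.rpow_sub han, Real.rpow_one]
        gcongr
      have h2 : β + s - 1 = -s + -t := by
        rw [hsdef, htdef, hgdef]; ring
      rw [← Real.rpow_add han]
      rwa [h2] at h1
    · have hne : (0:ℝ) < (n:ℝ) ^ (1+ε) := Real.rpow_pos_of_pos hn0 _
      calc a n ^ (-t) ≤ ((n:ℝ) ^ (1+ε)) ^ (-t) :=
            Real.rpow_le_rpow_of_nonpos hne hgn.1 (by linarith)
        _ = (n:ℝ) ^ (-p) := by
            rw [← Real.rpow_mul hn0.le]
            congr 1
            rw [hpdef]; ring
  refine ⟨g/8, by positivity, (div_lt_one (by norm_num : (0:ℝ) < 8)).2 (by linarith), ?_⟩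
  obtain ⟨M, hM⟩ := eventually_atTop.1 hterm
  have hfin : ∀ᶠ N : ℕ in atTop, S ≤ a N ^ (g/8) := by
    filter_upwards [hbig (max 1 (S ^ ((g/8)⁻¹)))] with N hN
    have h1 : S ^ ((g/8)⁻¹) ≤ a N := le_trans (le_max_right _ _) hN
    have h2 : (S ^ ((g/8)⁻¹)) ^ (g/8) ≤ a N ^ (g/8) :=
      Real.rpow_le_rpow (Real.rpow_nonneg hS0 _) h1 (by linarith)
    rwa [← Real.rpow_mul hS0, inv_mul_cancel₀ (by positivity : g/8 ≠ (0:ℝ)),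
      Real.rpow_one] at h2
  filter_upwards [eventually_ge_atTop M, hfin] with N hNM hNS
  have haN := hapos N
  -- monotonicity from N on
  have hmono : ∀ k : ℕ, a N ≤ a (N + k) := by
    intro k
    induction k with
    | zero => simp
    | succ k ih =>
      have h := (hM (N + k) (le_trans hNM (Nat.le_add_right _ _))).2.2
      calc a N ≤ a (N + k) := ih
        _ ≤ a (N + k + 1) := h
  have key : ∀ k : ℕ, b (N+k) / a (N+k) ≤ a N ^ (-s) * ((N+k : ℕ) : ℝ) ^ (-p) := by
    intro k
    obtain ⟨h1, h2, _⟩ := hM (N+k) (le_trans hNM (Nat.le_add_right _ _))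
    calc b (N+k) / a (N+k) ≤ a (N+k) ^ (-s) * a (N+k) ^ (-t) := h1
      _ ≤ a N ^ (-s) * ((N+k : ℕ) : ℝ) ^ (-p) := by
          apply mul_le_mul
          · exact Real.rpow_le_rpow_of_nonpos haN (hmono k) (by linarith)
          · exact h2
          · exact Real.rpow_nonneg (hapos _).le _
          · exact Real.rpow_nonneg haN.le _
  have hsumR : Summable (fun k : ℕ => ((N+k : ℕ) : ℝ) ^ (-p)) := by
    have h := (summable_nat_add_iff (f := fun n : ℕ => (n:ℝ) ^ (-p)) N).2 hS
    refine h.congr fun k => ?_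
    simp [Nat.add_comm]
  have hsumR' : Summable (fun k : ℕ => a N ^ (-s) * ((N+k : ℕ) : ℝ) ^ (-p)) :=
    hsumR.mul_left _
  have hsumL : Summable (fun k : ℕ => b (N+k) / a (N+k)) :=
    Summable.of_nonneg_of_le (fun k => (div_pos (hbpos _) (hapos _)).le) key hsumR'
  calc (∑' k : ℕ, b (N + k) / a (N + k))
      ≤ ∑' k : ℕ, a N ^ (-s) * ((N+k : ℕ) : ℝ) ^ (-p) := Summable.tsum_le_tsum key hsumL hsumR'
    _ = a N ^ (-s) * ∑' k : ℕ, ((N+k : ℕ) : ℝ) ^ (-p) := tsum_mul_left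
    _ ≤ a N ^ (-s) * S := by
        apply mul_le_mul_of_nonneg_left _ (Real.rpow_nonneg haN.le _)
        exact Summable.tsum_le_tsum_of_inj (fun k => N + k) (add_right_injective N)
          (fun c _ => Real.rpow_nonneg (Nat.cast_nonneg c) _) (fun k => le_rfl) hsumR hS
    _ ≤ a N ^ (-s) * a N ^ (g/8) :=
        mul_le_mul_of_nonneg_left hNS (Real.rpow_nonneg haN.le _)
    _ = a N ^ (-(g/8)) := by
        rw [← Real.rpow_add haN]
        congr 1
        rw [hsdef]; ring
end

section
/- Let ε > 0, 0 < α < 1, 0 ≤ β < ε/(1+ε), and let {a_n}, {b_n} be sequences of positive reals with n^(1+ε) ≤ a_n ≤ a_{n+1}, b_n ≤ a_n^β·2^((log₂ a_n)^α) for all sufficiently large n, and additionally a_n ≥ 2^n for all sufficiently large n. Then there is a fixed 0 < Γ < 1 such that for all sufficiently large N, ∑_{n=N}^∞ b_n/a_n ≤ 2^((log₂ a_N)^Γ) / a_N^(1−β). -/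
private lemma rpow_eq_rpow_sub_one_mul {x : ℝ} (hx : 0 < x) (t : ℝ) :
    x ^ t = x ^ (t - 1) * x := by
  have h := Real.rpow_add hx (t - 1) 1
  rw [Real.rpow_one] at h
  rw [← h]
  congr 1
  ring

set_option maxHeartbeats 1000000 in
open Filter in
/-- As in `stmt_16`, but additionally `a_n ≥ 2^n` for large `n`: then there is a
fixed `0 < Γ < 1` such that for all sufficiently large `N`,
`∑_{n=N}^∞ b_n/a_n ≤ 2^((log₂ a_N)^Γ)/a_N^(1−β)`. -/
theorem stmt_17 (ε α β : ℝ) (hε : 0 < ε) (hα0 : 0 < α) (hα1 : α < 1)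
    (hβ0 : 0 ≤ β) (hβ : β < ε / (1 + ε)) (a b : ℕ → ℝ)
    (hapos : ∀ n, 0 < a n) (hbpos : ∀ n, 0 < b n)
    (hgrow : ∀ᶠ n : ℕ in atTop,
      (n : ℝ) ^ (1 + ε) ≤ a n ∧ a n ≤ a (n + 1) ∧
        b n ≤ a n ^ β * 2 ^ (Real.logb 2 (a n)) ^ α)
    (h2n : ∀ᶠ n : ℕ in atTop, (2 : ℝ) ^ (n : ℕ) ≤ a n) :
    ∃ Γ : ℝ, 0 < Γ ∧ Γ < 1 ∧ ∀ᶠ N : ℕ in atTop,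
      (∑' k : ℕ, b (N + k) / a (N + k)) ≤
        2 ^ (Real.logb 2 (a N)) ^ Γ / a N ^ (1 - β) := by
  have hβ1 : β < 1 := by
    have h1 : ε / (1 + ε) < 1 := by
      rw [div_lt_one (by linarith)]; linarith
    linarith
  set Γ : ℝ := (1 + α) / 2 with hΓdef
  have hΓα : α < Γ := by rw [hΓdef]; linarith
  have hΓ1 : Γ < 1 := by rw [hΓdef]; linarith
  have hΓ0 : 0 < Γ := by rw [hΓdef]; linarith
  refine ⟨Γ, hΓ0, hΓ1, ?_⟩
  set c : ℝ := (1 - β) / 2 with hcdef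
  have hc0 : 0 < c := by rw [hcdef]; linarith
  have hrc1 : (2 : ℝ) ^ (-c) < 1 :=
    Real.rpow_lt_one_of_one_lt_of_neg one_lt_two (by linarith)
  have hrc0 : (0 : ℝ) < (2 : ℝ) ^ (-c) := Real.rpow_pos_of_pos two_pos _
  set C : ℝ := (1 - (2 : ℝ) ^ (-c))⁻¹ with hCdef
  have hC0 : 0 < C := by
    rw [hCdef]; exact inv_pos.2 (by linarith)
  -- eventual conditions on a real parameter L
  have E1 : ∀ᶠ L : ℝ in atTop, L ^ (α - 1) ≤ c := by
    have h := tendsto_rpow_neg_atTop (y := 1 - α) (by linarith)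
    have h2 := h.eventually_lt_const hc0
    filter_upwards [h2] with L hL
    simpa [neg_sub] using hL.le
  have E2 : ∀ᶠ L : ℝ in atTop, L ^ (α - Γ) ≤ 1 / 2 := by
    have h := tendsto_rpow_neg_atTop (y := Γ - α) (by linarith)
    have h2 := h.eventually_lt_const (by norm_num : (0:ℝ) < 1/2)
    filter_upwards [h2] with L hL
    simpa [neg_sub] using hL.le
  have E3 : ∀ᶠ L : ℝ in atTop, 48 / Real.log 2 ^ 2 ≤ L ^ (2 * Γ - 1) := by
    have h := tendsto_rpow_atTop (y := 2 * Γ - 1) (by rw [hΓdef]; linarith)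
    exact h.eventually_ge_atTop _
  have E4 : ∀ᶠ L : ℝ in atTop, 1 + C ≤ 2 * L := by
    filter_upwards [eventually_ge_atTop ((1 + C) / 2)] with L hL
    linarith
  have E0 : ∀ᶠ L : ℝ in atTop, (1 : ℝ) ≤ L := eventually_ge_atTop 1
  have Econd : ∀ᶠ L : ℝ in atTop,
      1 ≤ L ∧ L ^ (α - 1) ≤ c ∧ (L + 1 + C) * 2 ^ (L ^ α) ≤ 2 ^ (L ^ Γ) := by
    filter_upwards [E0, E1, E2, E3, E4] with L h0 h1 h2 h3 h4
    have hL0 : (0 : ℝ) < L := by linarith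
    refine ⟨h0, h1, ?_⟩
    have hlog2 : (0 : ℝ) < Real.log 2 := Real.log_pos one_lt_two
    -- L^α ≤ (1/2) L^Γ
    have hαΓ : L ^ α ≤ 1 / 2 * L ^ Γ := by
      have hh : L ^ α = L ^ (α - Γ) * L ^ Γ := by
        rw [← Real.rpow_add hL0]; congr 1; ring
      rw [hh]
      have hg : (0:ℝ) ≤ L ^ Γ := (Real.rpow_pos_of_pos hL0 _).le
      nlinarith [h2, hg]
    -- L + 1 + C ≤ 2 ^ ((1/2) L^Γ)
    have hlin : L + 1 + C ≤ 2 ^ (1 / 2 * L ^ Γ) := by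
      have h3L : L + 1 + C ≤ 3 * L := by linarith
      have hL2Γ : L ^ (2 * Γ) = L ^ (2 * Γ - 1) * L := rpow_eq_rpow_sub_one_mul hL0 _
      have h48 : 48 / Real.log 2 ^ 2 * L ≤ L ^ (2 * Γ) := by
        rw [hL2Γ]
        exact mul_le_mul_of_nonneg_right h3 hL0.le
      have hlog2sq : (0:ℝ) < Real.log 2 ^ 2 := by positivity
      have h5 : Real.log 2 ^ 2 / 16 * (48 / Real.log 2 ^ 2 * L) = 3 * L := by
        field_simp; ring
      have h6 : 3 * L ≤ Real.log 2 ^ 2 / 16 * L ^ (2 * Γ) := by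
        have := mul_le_mul_of_nonneg_left h48 (by positivity : (0:ℝ) ≤ Real.log 2 ^ 2 / 16)
        linarith [h5 ▸ this]
      have hquad : Real.log 2 ^ 2 / 16 * L ^ (2 * Γ) ≤ 2 ^ (1 / 2 * L ^ Γ) := by
        have h2exp : (2:ℝ) ^ (1 / 2 * L ^ Γ) =
            Real.exp (Real.log 2 * (1 / 2 * L ^ Γ)) := Real.rpow_def_of_pos two_pos _
        have hy0 : (0:ℝ) ≤ Real.log 2 * (1 / 2 * L ^ Γ) := by positivity
        have he1 : Real.log 2 * (1 / 2 * L ^ Γ) / 2 + 1 ≤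
            Real.exp (Real.log 2 * (1 / 2 * L ^ Γ) / 2) := Real.add_one_le_exp _
        have he2 : Real.exp (Real.log 2 * (1 / 2 * L ^ Γ)) =
            Real.exp (Real.log 2 * (1 / 2 * L ^ Γ) / 2) *
              Real.exp (Real.log 2 * (1 / 2 * L ^ Γ) / 2) := by
          rw [← Real.exp_add]; congr 1; ring
        have hsq : L ^ Γ * L ^ Γ = L ^ (2 * Γ) := by
          rw [← Real.rpow_add hL0]; congr 1; ring
        rw [h2exp, he2]
        nlinarith [he1, hy0, Real.exp_pos (Real.log 2 * (1 / 2 * L ^ Γ) / 2), hsq]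
      linarith
    -- combine
    have h2mono : (2:ℝ) ^ (L ^ α) ≤ 2 ^ (1 / 2 * L ^ Γ) :=
      Real.rpow_le_rpow_of_exponent_le one_le_two hαΓ
    have hmul : (L + 1 + C) * 2 ^ (L ^ α) ≤
        2 ^ (1 / 2 * L ^ Γ) * 2 ^ (1 / 2 * L ^ Γ) :=
      mul_le_mul hlin h2mono (Real.rpow_pos_of_pos two_pos _).le
        (Real.rpow_pos_of_pos two_pos _).le
    calc (L + 1 + C) * 2 ^ (L ^ α) ≤ 2 ^ (1/2 * L ^ Γ) * 2 ^ (1/2 * L ^ Γ) := hmul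
      _ = 2 ^ (L ^ Γ) := by rw [← Real.rpow_add two_pos]; congr 1; ring
  obtain ⟨T, hT⟩ := eventually_atTop.mp Econd
  obtain ⟨M, hM⟩ := eventually_atTop.mp (hgrow.and h2n)
  -- monotonicity of a from M on
  have amono : ∀ m n : ℕ, M ≤ m → m ≤ n → a m ≤ a n := by
    intro m n hm hmn
    induction n, hmn using Nat.le_induction with
    | base => exact le_rfl
    | succ n hn ih => exact ih.trans (hM n (hm.trans hn)).1.2.1
  -- logb lower bound
  have hLn : ∀ n : ℕ, M ≤ n → (n : ℝ) ≤ Real.logb 2 (a n) := by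
    intro n hn
    have h2 := (hM n hn).2
    have h3 := Real.logb_le_logb_of_le one_lt_two (pow_pos two_pos n) h2
    rwa [← Real.rpow_natCast 2 n, Real.logb_rpow (by norm_num) (by norm_num)] at h3
  filter_upwards [eventually_ge_atTop M,
    (tendsto_natCast_atTop_atTop (R := ℝ)).eventually_ge_atTop T] with N hNM hNT
  set LN : ℝ := Real.logb 2 (a N) with hLNdef
  have hLmono : ∀ n : ℕ, N ≤ n → LN ≤ Real.logb 2 (a n) := fun n hn =>
    Real.logb_le_logb_of_le one_lt_two (hapos N) (amono N n hNM hn)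
  have hLNT : T ≤ LN := hNT.trans (hLn N hNM)
  obtain ⟨h1L, hδc, hbig⟩ := hT LN hLNT
  have hLN0 : (0:ℝ) < LN := by linarith
  set δ : ℝ := LN ^ (α - 1) with hδdef
  have hδ0 : 0 < δ := Real.rpow_pos_of_pos hLN0 _
  set c' : ℝ := 1 - β - δ with hc'def
  have hcc' : c ≤ c' := by rw [hc'def, hcdef]; rw [hcdef] at hδc; linarith
  have hc'0 : 0 < c' := lt_of_lt_of_le hc0 hcc'
  set r : ℝ := (2:ℝ) ^ (-c') with hrdef
  have hr0 : (0:ℝ) < r := Real.rpow_pos_of_pos two_pos _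
  have hr1 : r < 1 := Real.rpow_lt_one_of_one_lt_of_neg one_lt_two (by linarith)
  -- per-term bound
  have key : ∀ n : ℕ, N ≤ n → b n / a n ≤ 2 ^ (-(c' * Real.logb 2 (a n))) := by
    intro n hn
    have hMn : M ≤ n := hNM.trans hn
    have hble := (hM n hMn).1.2.2
    set Ln : ℝ := Real.logb 2 (a n) with hLndef
    have hLNn : LN ≤ Ln := hLmono n hn
    have hLn0 : (0:ℝ) < Ln := lt_of_lt_of_le hLN0 hLNn
    have han : a n = 2 ^ Ln := (Real.rpow_logb two_pos (by norm_num) (hapos n)).symm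
    have step1 : b n / a n ≤ (a n ^ β * 2 ^ Ln ^ α) / a n :=
      (div_le_div_iff_of_pos_right (hapos n)).2 hble
    have step2 : (a n ^ β * 2 ^ Ln ^ α) / a n = 2 ^ (Ln * β + Ln ^ α - Ln) := by
      rw [Real.rpow_sub two_pos, Real.rpow_add two_pos, han,
        ← Real.rpow_mul (by norm_num : (0:ℝ) ≤ 2)]
    have step3 : Ln * β + Ln ^ α - Ln ≤ -(c' * Ln) := by
      have hLnα : Ln ^ α ≤ δ * Ln := by
        have h1 : Ln ^ (α - 1) ≤ δ := by
          rw [hδdef]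
          exact Real.rpow_le_rpow_of_nonpos hLN0 hLNn (by linarith)
        calc Ln ^ α = Ln ^ (α - 1) * Ln := rpow_eq_rpow_sub_one_mul hLn0 _
          _ ≤ δ * Ln := mul_le_mul_of_nonneg_right h1 hLn0.le
      rw [hc'def]; nlinarith
    calc b n / a n ≤ (a n ^ β * 2 ^ Ln ^ α) / a n := step1
      _ = 2 ^ (Ln * β + Ln ^ α - Ln) := step2
      _ ≤ 2 ^ (-(c' * Ln)) := Real.rpow_le_rpow_of_exponent_le one_le_two step3
  have hnonneg : ∀ k : ℕ, 0 ≤ b (N + k) / a (N + k) := fun k =>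
    div_nonneg (hbpos _).le (hapos _).le
  -- decay bound in terms of n
  have decay : ∀ n : ℕ, N ≤ n → b n / a n ≤ r ^ n := by
    intro n hn
    have h1 := key n hn
    have h2 : -(c' * Real.logb 2 (a n)) ≤ -(c' * n) := by
      have := hLn n (hNM.trans hn)
      nlinarith
    calc b n / a n ≤ 2 ^ (-(c' * Real.logb 2 (a n))) := h1
      _ ≤ 2 ^ (-(c' * (n:ℝ))) := Real.rpow_le_rpow_of_exponent_le one_le_two h2
      _ = r ^ n := by
        rw [hrdef, ← Real.rpow_natCast ((2:ℝ) ^ (-c')) n,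
          ← Real.rpow_mul (by norm_num : (0:ℝ) ≤ 2), neg_mul]
  have hsumg0 : Summable (fun k : ℕ => r ^ (N + k)) := by
    have h := (summable_geometric_of_lt_one hr0.le hr1).mul_left (r ^ N)
    exact h.congr fun k => (pow_add r N k).symm
  have hsum : Summable (fun k : ℕ => b (N + k) / a (N + k)) :=
    Summable.of_nonneg_of_le hnonneg
      (fun k => decay (N + k) (Nat.le_add_right _ _)) hsumg0
  set K : ℕ := ⌈LN⌉₊ with hKdef
  set A : ℝ := (2:ℝ) ^ (-(c' * LN)) with hAdef
  have hA0 : (0:ℝ) < A := Real.rpow_pos_of_pos two_pos _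
  have hKLN : LN ≤ (K : ℝ) := Nat.le_ceil LN
  have hKle : (K : ℝ) ≤ LN + 1 := (Nat.ceil_lt_add_one hLN0.le).le
  -- part 1
  have part1 : (∑ k ∈ Finset.range K, b (N + k) / a (N + k)) ≤ (K : ℝ) * A := by
    have h := Finset.sum_le_card_nsmul (Finset.range K)
      (fun k => b (N + k) / a (N + k)) A ?_
    · simpa [Finset.card_range, nsmul_eq_mul] using h
    · intro k _
      have h1 := key (N + k) (Nat.le_add_right _ _)
      have h2 : -(c' * Real.logb 2 (a (N + k))) ≤ -(c' * LN) := by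
        have := hLmono (N + k) (Nat.le_add_right _ _)
        nlinarith
      exact h1.trans (Real.rpow_le_rpow_of_exponent_le one_le_two h2)
  -- part 2
  have part2 : (∑' j : ℕ, b (N + (j + K)) / a (N + (j + K))) ≤ A * C := by
    have hterm : ∀ j : ℕ, b (N + (j + K)) / a (N + (j + K)) ≤ A * r ^ j := by
      intro j
      have h1 := key (N + (j + K)) (Nat.le_add_right _ _)
      have h2 : -(c' * Real.logb 2 (a (N + (j + K)))) ≤ -(c' * (LN + j)) := by
        have hL := hLn (N + (j + K)) (hNM.trans (Nat.le_add_right _ _))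
        have h4 : LN + (j:ℝ) ≤ ((N + (j + K) : ℕ) : ℝ) := by
          push_cast
          have h5 : LN ≤ (N:ℝ) + K := by
            have : (0:ℝ) ≤ (N:ℝ) := Nat.cast_nonneg N
            linarith [hKLN]
          linarith
        nlinarith [h4.trans hL]
      have h3 : (2:ℝ) ^ (-(c' * (LN + (j:ℝ)))) = A * r ^ j := by
        rw [hAdef, hrdef, ← Real.rpow_natCast ((2:ℝ) ^ (-c')) j,
          ← Real.rpow_mul (by norm_num : (0:ℝ) ≤ 2), ← Real.rpow_add two_pos]
        congr 1; ring
      exact (h1.trans (Real.rpow_le_rpow_of_exponent_le one_le_two h2)).trans_eq h3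
    have hsum2 : Summable (fun j : ℕ => b (N + (j + K)) / a (N + (j + K))) :=
      (summable_nat_add_iff K).2 hsum
    have hsumg : Summable (fun j : ℕ => A * r ^ j) :=
      (summable_geometric_of_lt_one hr0.le hr1).mul_left A
    calc (∑' j : ℕ, b (N + (j + K)) / a (N + (j + K))) ≤ ∑' j : ℕ, A * r ^ j :=
          Summable.tsum_le_tsum hterm hsum2 hsumg
      _ = A * (1 - r)⁻¹ := by rw [tsum_mul_left, tsum_geometric_of_lt_one hr0.le hr1]
      _ ≤ A * C := by
        refine mul_le_mul_of_nonneg_left ?_ hA0.le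
        rw [hCdef]
        have hrc : r ≤ (2:ℝ) ^ (-c) :=
          Real.rpow_le_rpow_of_exponent_le one_le_two (by linarith)
        exact inv_anti₀ (by linarith) (by linarith)
  -- combine
  have hsplit := Summable.sum_add_tsum_nat_add K hsum
  have htot : (∑' k : ℕ, b (N + k) / a (N + k)) ≤ (LN + 1 + C) * A := by
    rw [← hsplit]
    have h7 : (K:ℝ) * A + A * C ≤ (LN + 1 + C) * A := by nlinarith
    calc (∑ k ∈ Finset.range K, b (N + k) / a (N + k)) +
          (∑' j : ℕ, b (N + (j + K)) / a (N + (j + K))) ≤ (K:ℝ) * A + A * C :=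
          add_le_add part1 part2
      _ ≤ (LN + 1 + C) * A := h7
  -- final estimate
  have hfin : (LN + 1 + C) * A ≤ 2 ^ LN ^ Γ / a N ^ (1 - β) := by
    have haN : a N = 2 ^ LN := (Real.rpow_logb two_pos (by norm_num) (hapos N)).symm
    have haNpow : a N ^ (1 - β) = 2 ^ (LN * (1 - β)) := by
      nth_rewrite 1 [haN]
      rw [← Real.rpow_mul (by norm_num : (0:ℝ) ≤ 2)]
    have hLNα : LN ^ α = δ * LN := by
      rw [hδdef]; exact rpow_eq_rpow_sub_one_mul hLN0 _
    have hAeq : A = 2 ^ (LN ^ α) * 2 ^ (-(LN * (1 - β))) := by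
      rw [hAdef, ← Real.rpow_add two_pos]
      congr 1
      rw [hc'def, hLNα]; ring
    rw [haNpow, hAeq, div_eq_mul_inv, ← Real.rpow_neg (by norm_num : (0:ℝ) ≤ 2)]
    calc (LN + 1 + C) * (2 ^ (LN ^ α) * 2 ^ (-(LN * (1 - β))))
        = ((LN + 1 + C) * 2 ^ (LN ^ α)) * 2 ^ (-(LN * (1 - β))) := by ring
      _ ≤ 2 ^ (LN ^ Γ) * 2 ^ (-(LN * (1 - β))) :=
          mul_le_mul_of_nonneg_right hbig (Real.rpow_pos_of_pos two_pos _).le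
  exact htot.trans hfin
end
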